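/- Let P₁, P₂ be projections in a finite dimensional von Neumann algebra A with P₁ + P₂ = 1, and similarly Q₁ + Q₂ = 1. If R_{hk} (h,k ∈ {1,2}) are positive elements of A satisfying R_{hk} ≤ P_h and R_{hk} ≤ Q_k for all h,k, and R_{11}+R_{12} = P₁ and R_{11}+R_{21} = Q₁, then R_{hk}R_{h'k'} = 0 whenever (h,k) ≠ (h',k'), and consequently P₁ and Q₁ commute. -/

import Mathlib

open scoped ComplexOrder

open Matrix

private lemma psd_neg_psd_eq_zero {n : ℕ} {X : Matrix (Fin n) (Fin n) ℂ}
    (h1 : X.PosSemidef) (h2 : (-X).PosSemidef) : X = 0 := by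
  have hv : ∀ x : Fin n → ℂ, X *ᵥ x = 0 := by
    intro x
    refine (h1.dotProduct_mulVec_zero_iff x).mp ?_
    have a := h1.dotProduct_mulVec_nonneg x
    have b := h2.dotProduct_mulVec_nonneg x
    rw [neg_mulVec, dotProduct_neg] at b
    exact le_antisymm (by simpa using b) a
  ext i j
  have := congrFun (hv (Pi.single j 1)) i
  simpa [mulVec_single] using this

open scoped MatrixOrder in
private lemma psd_conj_zero {n : ℕ} {X M : Matrix (Fin n) (Fin n) ℂ}
    (hX : X.PosSemidef) (h : Mᴴ * X * M = 0) : X * M = 0 := by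
  have hs := Matrix.nonneg_iff_posSemidef.mp (CFC.sqrt_nonneg X)
  have hherm : (CFC.sqrt X)ᴴ = CFC.sqrt X := hs.isHermitian
  have key : (CFC.sqrt X * M)ᴴ * (CFC.sqrt X * M) = 0 := by
    calc (CFC.sqrt X * M)ᴴ * (CFC.sqrt X * M) = Mᴴ * (CFC.sqrt X)ᴴ * (CFC.sqrt X * M) := by
          rw [conjTranspose_mul]
      _ = Mᴴ * (CFC.sqrt X * CFC.sqrt X) * M := by rw [hherm]; noncomm_ring
      _ = Mᴴ * X * M := by rw [CFC.sqrt_mul_sqrt_self X (Matrix.nonneg_iff_posSemidef.mpr hX)]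
      _ = 0 := h
  have hz : CFC.sqrt X * M = 0 := conjTranspose_mul_self_eq_zero.mp key
  calc X * M = CFC.sqrt X * (CFC.sqrt X * M) := by rw [← mul_assoc, CFC.sqrt_mul_sqrt_self X (Matrix.nonneg_iff_posSemidef.mpr hX)]
    _ = 0 := by rw [hz, mul_zero]

/-- If `0 ≤ X ≤ P` with `P` a projection, then `X * (1 - P) = 0`. -/
private lemma range_lemma {n : ℕ} {X E : Matrix (Fin n) (Fin n) ℂ}
    (hX : X.PosSemidef) (hXE : (E - X).PosSemidef)
    (hEh : E.IsHermitian) (hEp : E * E = E) : X * (1 - E) = 0 := by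
  have hMh : (1 - E)ᴴ = 1 - E := by
    rw [conjTranspose_sub, conjTranspose_one, hEh.eq]
  have hE0 : (1 - E)ᴴ * E * (1 - E) = 0 := by
    rw [hMh]
    have : (1 - E) * E = 0 := by
      rw [sub_mul, one_mul, hEp, sub_self]
    rw [this, zero_mul]
  have hconj : ((1 - E)ᴴ * (E - X) * (1 - E)).PosSemidef :=
    hXE.conjTranspose_mul_mul_same _
  have hconjX : ((1 - E)ᴴ * X * (1 - E)).PosSemidef :=
    hX.conjTranspose_mul_mul_same _
  have hneg : (-((1 - E)ᴴ * X * (1 - E))).PosSemidef := by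
    have : (1 - E)ᴴ * (E - X) * (1 - E)
        = -((1 - E)ᴴ * X * (1 - E)) + (1 - E)ᴴ * E * (1 - E) := by
      noncomm_ring
    rw [this, hE0, add_zero] at hconj
    exact hconj
  have hzero : (1 - E)ᴴ * X * (1 - E) = 0 := psd_neg_psd_eq_zero hconjX hneg
  exact psd_conj_zero hX hzero

/-- Key orthogonality fact: `0 ≤ X ≤ E`, `0 ≤ Y ≤ 1 - E`, `E` projection ⇒ `X * Y = 0`. -/
private lemma key_orth {n : ℕ} {X Y E : Matrix (Fin n) (Fin n) ℂ}
    (hX : X.PosSemidef) (hY : Y.PosSemidef)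
    (hXE : (E - X).PosSemidef) (hYE : (1 - E - Y).PosSemidef)
    (hEh : E.IsHermitian) (hEp : E * E = E) : X * Y = 0 := by
  have hEh' : (1 - E).IsHermitian := (Matrix.isHermitian_one).sub hEh
  have hEp' : (1 - E) * (1 - E) = 1 - E := by
    rw [sub_mul, mul_sub, mul_sub, one_mul, mul_one, one_mul, hEp]
    abel
  have hX1 : X * (1 - E) = 0 := range_lemma hX hXE hEh hEp
  have hY1 : Y * (1 - (1 - E)) = 0 := by
    apply range_lemma hY _ hEh' hEp'
    simpa using hYE
  have hYE2 : Y * E = 0 := by simpa using hY1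
  have hEY : E * Y = 0 := by
    have := congrArg conjTranspose hYE2
    rwa [conjTranspose_mul, hEh.eq, hY.isHermitian.eq, conjTranspose_zero] at this
  have hXE2 : X * E = X := by
    have := hX1
    rw [mul_sub, mul_one, sub_eq_zero] at this
    exact this.symm
  calc X * Y = X * E * Y := by rw [hXE2]
    _ = X * (E * Y) := by rw [mul_assoc]
    _ = 0 := by rw [hEY, mul_zero]

/-- Let `P 0 + P 1 = 1` and `Q 0 + Q 1 = 1` be decompositions of the identity
into projections in a (block) matrix algebra, and let `R h k` be positive elements with
`R h k ≤ P h`, `R h k ≤ Q k`, `R 0 0 + R 0 1 = P 0` and `R 0 0 + R 1 0 = Q 0`.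
Then `R h k * R h' k' = 0` whenever `(h,k) ≠ (h',k')`, and consequently `P 0` and `Q 0`
commute.  (The order relation `R ≤ S` is expressed by `(S - R).PosSemidef`.) -/
theorem orthogonality_and_commutation_of_projections
    {n : ℕ} (P Q : Fin 2 → Matrix (Fin n) (Fin n) ℂ)
    (hPproj : ∀ h, (P h).IsHermitian ∧ P h * P h = P h)
    (hQproj : ∀ k, (Q k).IsHermitian ∧ Q k * Q k = Q k)
    (hPsum : P 0 + P 1 = 1) (hQsum : Q 0 + Q 1 = 1)
    (R : Fin 2 → Fin 2 → Matrix (Fin n) (Fin n) ℂ)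
    (hRpos : ∀ h k, (R h k).PosSemidef)
    (hRleP : ∀ h k, (P h - R h k).PosSemidef)
    (hRleQ : ∀ h k, (Q k - R h k).PosSemidef)
    (hP0 : R 0 0 + R 0 1 = P 0)
    (hQ0 : R 0 0 + R 1 0 = Q 0) :
    (∀ h k h' k', (h, k) ≠ (h', k') → R h k * R h' k' = 0) ∧
    P 0 * Q 0 = Q 0 * P 0 := by
  have hP1 : P 1 = 1 - P 0 := by rw [← hPsum]; abel
  have hQ1 : Q 1 = 1 - Q 0 := by rw [← hQsum]; abel
  -- case h ≠ h' : use projection P 0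
  have hPcase : ∀ k k', R 0 k * R 1 k' = 0 := fun k k' =>
    key_orth (hRpos 0 k) (hRpos 1 k') (hRleP 0 k)
      (by rw [← hP1]; exact hRleP 1 k') (hPproj 0).1 (hPproj 0).2
  -- case k ≠ k' : use projection Q 0
  have hQcase : ∀ h h', R h 0 * R h' 1 = 0 := fun h h' =>
    key_orth (hRpos h 0) (hRpos h' 1) (hRleQ h 0)
      (by rw [← hQ1]; exact hRleQ h' 1) (hQproj 0).1 (hQproj 0).2
  have symm0 : ∀ h k h' k', R h k * R h' k' = 0 → R h' k' * R h k = 0 := by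
    intro h k h' k' hz
    have := congrArg conjTranspose hz
    rwa [conjTranspose_mul, (hRpos h k).isHermitian.eq, (hRpos h' k').isHermitian.eq,
      conjTranspose_zero] at this
  have two : ∀ a b : Fin 2, a ≠ b → (a = 0 ∧ b = 1) ∨ (a = 1 ∧ b = 0) := by decide
  have main : ∀ h k h' k', (h, k) ≠ (h', k') → R h k * R h' k' = 0 := by
    intro h k h' k' hne
    by_cases hh : h = h'
    · subst hh
      have hk : k ≠ k' := fun hk => hne (by rw [hk])
      rcases two k k' hk with ⟨rfl, rfl⟩ | ⟨rfl, rfl⟩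
      · exact hQcase _ _
      · exact symm0 _ _ _ _ (hQcase _ _)
    · rcases two h h' hh with ⟨rfl, rfl⟩ | ⟨rfl, rfl⟩
      · exact hPcase _ _
      · exact symm0 _ _ _ _ (hPcase _ _)
  refine ⟨main, ?_⟩
  have e1 : P 0 * Q 0 = R 0 0 * R 0 0 := by
    rw [← hP0, ← hQ0, add_mul, mul_add, mul_add]
    rw [main 0 0 1 0 (by decide), main 0 1 0 0 (by decide), main 0 1 1 0 (by decide)]
    simp
  have e2 : Q 0 * P 0 = R 0 0 * R 0 0 := by
    rw [← hP0, ← hQ0, add_mul, mul_add, mul_add]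
    rw [main 0 0 0 1 (by decide), main 1 0 0 0 (by decide), main 1 0 0 1 (by decide)]
    simp
  rw [e1, e2]
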